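/- Let V be a random variable on a probability space (Ω, 𝓕, P) with values in (0,1] satisfying P(V ≤ ε) ≤ ε for every ε ∈ (0,1]. Then E[ (1/V − 1 + ln V)/(ln V)² ] ≤ 1, where the integrand is taken to be 1/2 on the event {V = 1}. In other words, the Ramdas calibration of any p-test is an e-test. -/

import Mathlib

open MeasureTheory ENNReal Set

lemma calib_eq_lintegral {v : ℝ} (hv : v ∈ Set.Ioc (0:ℝ) 1) :
    ENNReal.ofReal (if v = 1 then 1 / 2
      else (1 / v - 1 + Real.log v) / (Real.log v) ^ 2)
      = ∫⁻ l in Set.Ioc (0:ℝ) 1, ENNReal.ofReal (l * v ^ (l - 1)) := by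
  have hv0 : 0 < v := hv.1
  have hcont : Continuous (fun l : ℝ => l * v ^ (l - 1)) :=
    continuous_id.mul (continuous_const.rpow (continuous_id.sub continuous_const)
      (fun x => Or.inl hv0.ne'))
  have hint : IntegrableOn (fun l : ℝ => l * v ^ (l - 1)) (Set.Ioc 0 1) :=
    hcont.integrableOn_Ioc
  have hnn : ∀ l ∈ Set.Ioc (0:ℝ) 1, 0 ≤ l * v ^ (l - 1) := fun l hl =>
    mul_nonneg hl.1.le (Real.rpow_nonneg hv0.le _)
  rw [← MeasureTheory.ofReal_integral_eq_lintegral_ofReal hint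
    ((ae_restrict_iff' measurableSet_Ioc).2 (Filter.Eventually.of_forall hnn))]
  congr 1
  rw [← intervalIntegral.integral_of_le zero_le_one]
  rcases eq_or_lt_of_le hv.2 with h1 | h1
  · simp only [h1, if_pos]
    have : ∀ l : ℝ, l * (1:ℝ) ^ (l - 1) = l := by
      intro l; rw [Real.one_rpow, mul_one]
    simp only [this]
    rw [integral_id]
    norm_num
  · rw [if_neg h1.ne]
    set a := Real.log v with ha
    have ha0 : a < 0 := Real.log_neg hv0 h1
    have key : ∀ x ∈ Set.uIcc (0:ℝ) 1,
        HasDerivAt (fun x : ℝ => (a * x - 1) * v ^ (x - 1) / a ^ 2)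
          (x * v ^ (x - 1)) x := by
      intro x _
      have h2 : HasDerivAt (fun x : ℝ => v ^ (x - 1)) (v ^ (x - 1) * a) x := by
        have := ((Real.hasStrictDerivAt_const_rpow hv0 (x - 1)).hasDerivAt).comp x
          ((hasDerivAt_id x).sub_const 1)
        rw [mul_one] at this
        exact this
      have h3 : HasDerivAt (fun x : ℝ => a * x - 1) a x := by
        simpa using ((hasDerivAt_id x).const_mul a).sub_const 1
      have := (h3.mul h2).div_const (a ^ 2)
      refine this.congr_deriv (Eq.symm ?_)
      rw [eq_div_iff (pow_ne_zero 2 ha0.ne)]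
      ring
    rw [intervalIntegral.integral_eq_sub_of_hasDerivAt key
      (hcont.intervalIntegrable 0 1)]
    rw [show (1:ℝ) - 1 = 0 by ring, show (0:ℝ) - 1 = -1 by ring,
      Real.rpow_zero, Real.rpow_neg_one]
    have ha2 : a ^ 2 ≠ 0 := pow_ne_zero 2 ha0.ne
    field_simp
    ring


lemma inner_bound {Ω : Type*} [MeasurableSpace Ω] (P : Measure Ω) [IsProbabilityMeasure P]
    (V : Ω → ℝ) (hV : Measurable V) (hVrange : ∀ ω, V ω ∈ Set.Ioc (0 : ℝ) 1)
    (hpval : ∀ ε ∈ Set.Ioc (0 : ℝ) 1, P {ω | V ω ≤ ε} ≤ ENNReal.ofReal ε)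
    {l : ℝ} (hl : l ∈ Set.Ioc (0:ℝ) 1) :
    ∫⁻ ω, ENNReal.ofReal (l * V ω ^ (l - 1)) ∂P ≤ 1 := by
  rcases eq_or_lt_of_le hl.2 with h1 | h1
  · simp only [h1, sub_self, Real.rpow_zero, mul_one, ofReal_one, lintegral_one,
      measure_univ, le_refl]
  -- l < 1
  have hl0 : 0 < l := hl.1
  set c : ℝ := 1 / (1 - l) with hc
  have h1l : 0 < 1 - l := by linarith
  have hc1 : 1 < c := by
    rw [hc, lt_div_iff₀ h1l]; linarith
  have hc0 : 0 < c := lt_trans one_pos hc1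
  -- pull out l
  have step1 : ∀ ω, ENNReal.ofReal (l * V ω ^ (l - 1))
      = ENNReal.ofReal l * ENNReal.ofReal (V ω ^ (l - 1)) := fun ω =>
    ENNReal.ofReal_mul hl0.le
  simp only [step1]
  rw [lintegral_const_mul' _ _ ofReal_ne_top]
  -- layercake
  have hnn : 0 ≤ᵐ[P] fun ω => V ω ^ (l - 1) :=
    Filter.Eventually.of_forall fun ω => Real.rpow_nonneg (hVrange ω).1.le _
  have hmble : AEMeasurable (fun ω => V ω ^ (l - 1)) P := by
    have he : (fun ω => V ω ^ (l - 1)) = fun ω => Real.exp (Real.log (V ω) * (l - 1)) := by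
      funext ω; rw [Real.rpow_def_of_pos (hVrange ω).1]
    rw [he]
    exact (Real.measurable_exp.comp ((Real.measurable_log.comp hV).mul
      measurable_const)).aemeasurable
  rw [lintegral_eq_lintegral_meas_lt P hnn hmble]
  have hsplit : Set.Ioi (0:ℝ) = Set.Ioc 0 1 ∪ Set.Ioi 1 :=
    (Set.Ioc_union_Ioi_eq_Ioi zero_le_one).symm
  rw [hsplit, lintegral_union measurableSet_Ioi (Set.Ioc_disjoint_Ioi le_rfl)]
  have p1 : ∫⁻ t in Set.Ioc (0:ℝ) 1, P {a | t < V a ^ (l - 1)} ≤ 1 := by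
    calc ∫⁻ t in Set.Ioc (0:ℝ) 1, P {a | t < V a ^ (l - 1)}
        ≤ ∫⁻ _ in Set.Ioc (0:ℝ) 1, 1 :=
          setLIntegral_mono measurable_const (fun t _ => prob_le_one)
      _ = 1 := by rw [setLIntegral_one, Real.volume_Ioc]; norm_num
  have hb : ∀ t ∈ Set.Ioi (1:ℝ), P {a | t < V a ^ (l - 1)} ≤ ENNReal.ofReal (t ^ (-c)) := by
    intro t ht
    have ht1 : (1:ℝ) < t := ht
    have ht0 : (0:ℝ) < t := lt_trans one_pos ht1
    have he : t ^ (-c) ∈ Set.Ioc (0:ℝ) 1 :=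
      ⟨Real.rpow_pos_of_pos ht0 _,
       Real.rpow_le_one_of_one_le_of_nonpos ht1.le (neg_nonpos.2 hc0.le)⟩
    refine le_trans (measure_mono ?_) (hpval _ he)
    intro a ha
    have hVa : 0 < V a := (hVrange a).1
    have ha' : t < V a ^ (l - 1) := ha
    have h5 : (V a ^ (l - 1)) ^ (-c) ≤ t ^ (-c) :=
      Real.rpow_le_rpow_of_nonpos ht0 ha'.le (neg_nonpos.2 hc0.le)
    have h6 : (V a ^ (l - 1)) ^ (-c) = V a := by
      rw [← Real.rpow_mul hVa.le]
      have hone : (l - 1) * (-c) = 1 := by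
        rw [hc]; field_simp; ring
      rw [hone, Real.rpow_one]
    show V a ≤ t ^ (-c)
    rw [← h6]; exact h5
  have hlt : (-c : ℝ) < -1 := by linarith
  have p2 : ∫⁻ t in Set.Ioi (1:ℝ), P {a | t < V a ^ (l - 1)}
      ≤ ENNReal.ofReal ((1 - l) / l) := by
    calc ∫⁻ t in Set.Ioi (1:ℝ), P {a | t < V a ^ (l - 1)}
        ≤ ∫⁻ t in Set.Ioi (1:ℝ), ENNReal.ofReal (t ^ (-c)) :=
          setLIntegral_mono' measurableSet_Ioi hb
      _ = ENNReal.ofReal (∫ t in Set.Ioi (1:ℝ), t ^ (-c)) := by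
          rw [← MeasureTheory.ofReal_integral_eq_lintegral_ofReal
            (integrableOn_Ioi_rpow_of_lt hlt one_pos)
            ((ae_restrict_iff' measurableSet_Ioi).2 (Filter.Eventually.of_forall
              (fun t ht => Real.rpow_nonneg (le_of_lt (lt_trans one_pos ht)) _)))]
      _ = ENNReal.ofReal ((1 - l) / l) := by
          rw [integral_Ioi_rpow_of_lt hlt one_pos, Real.one_rpow]
          congr 1
          rw [hc]
          have hl' : l ≠ 0 := hl0.ne'
          field_simp
          rw [show (-1 + (1 - l)) = -l by ring, div_neg, neg_neg]
          exact div_self hl'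
  calc ENNReal.ofReal l * ((∫⁻ t in Set.Ioc (0:ℝ) 1, P {a | t < V a ^ (l - 1)})
        + ∫⁻ t in Set.Ioi (1:ℝ), P {a | t < V a ^ (l - 1)})
      ≤ ENNReal.ofReal l * (1 + ENNReal.ofReal ((1 - l) / l)) :=
        mul_le_mul_right (add_le_add p1 p2) _
    _ = 1 := by
        rw [mul_add, mul_one, ← ENNReal.ofReal_mul hl0.le]
        have : l * ((1 - l) / l) = 1 - l := by field_simp
        rw [this, ← ENNReal.ofReal_add hl0.le h1l.le]
        norm_num

/-- The Ramdas calibration of any p-value is an e-value: if `V` is a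
`(0,1]`-valued random variable with `P(V ≤ ε) ≤ ε` for all `ε ∈ (0,1]`, then
`E[(1/V − 1 + ln V)/(ln V)²] ≤ 1`, the integrand being `1/2` on `{V = 1}`. -/
theorem ramdas_calibration_is_e_test
    {Ω : Type*} [MeasurableSpace Ω] (P : Measure Ω) [IsProbabilityMeasure P]
    (V : Ω → ℝ) (hV : Measurable V) (hVrange : ∀ ω, V ω ∈ Set.Ioc (0 : ℝ) 1)
    (hpval : ∀ ε ∈ Set.Ioc (0 : ℝ) 1, P {ω | V ω ≤ ε} ≤ ENNReal.ofReal ε) :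
    ∫⁻ ω, ENNReal.ofReal (if V ω = 1 then 1 / 2
      else (1 / V ω - 1 + Real.log (V ω)) / (Real.log (V ω)) ^ 2) ∂P ≤ 1 := by
  have hrw : ∀ ω, ENNReal.ofReal (if V ω = 1 then 1 / 2
      else (1 / V ω - 1 + Real.log (V ω)) / (Real.log (V ω)) ^ 2)
      = ∫⁻ l in Set.Ioc (0:ℝ) 1, ENNReal.ofReal (l * V ω ^ (l - 1)) :=
    fun ω => calib_eq_lintegral (hVrange ω)
  simp only [hrw]
  have hprod : AEMeasurable (Function.uncurry fun (ω : Ω) (l : ℝ) =>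
      ENNReal.ofReal (l * V ω ^ (l - 1)))
      (P.prod ((volume : Measure ℝ).restrict (Set.Ioc 0 1))) := by
    have he : (Function.uncurry fun (ω : Ω) (l : ℝ) => ENNReal.ofReal (l * V ω ^ (l - 1)))
        = fun p : Ω × ℝ =>
          ENNReal.ofReal (p.2 * Real.exp (Real.log (V p.1) * (p.2 - 1))) := by
      funext p
      simp only [Function.uncurry]
      rw [Real.rpow_def_of_pos (hVrange p.1).1]
    rw [he]
    exact (measurable_ofReal.comp (measurable_snd.mul (Real.measurable_exp.comp
      (((Real.measurable_log.comp (hV.comp measurable_fst))).mul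
        (measurable_snd.sub measurable_const))))).aemeasurable
  rw [lintegral_lintegral_swap hprod]
  calc ∫⁻ l in Set.Ioc (0:ℝ) 1, ∫⁻ ω, ENNReal.ofReal (l * V ω ^ (l - 1)) ∂P
      ≤ ∫⁻ _ in Set.Ioc (0:ℝ) 1, 1 :=
        setLIntegral_mono' measurableSet_Ioc
          (fun l hl => inner_bound P V hV hVrange hpval hl)
    _ = 1 := by rw [setLIntegral_one, Real.volume_Ioc]; norm_num
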